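/- Let X = [0,1]^d with the Euclidean norm and β ∈ (0,∞). Let the nested designs X_n be generated by the boundary-phobic greedy algorithm: x_1 ∈ X is arbitrary and, for each n ≥ 1, x_{n+1} ∈ Argmax_{x∈X} D_β(x, X_n, X) where D_β(x, X_n, X) = min{ min_{x_i∈X_n} ‖x − x_i‖, β·d(x, ∂X) }. Then for all n ≥ 2, MR(X_n) ≤ 2·(1 + √d/β), CR(X_n) ≤ 2·(1 + √d/β)·CR*_n, and SR(X_n) ≥ SR*_n/(2·(1 + √d/β)). -/

import Mathlib

open Metric Set MeasureTheory

/-- Distance from a point `x` to the nearest point of the design `D`. -/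
noncomputable def minDist {E : Type*} [NormedAddCommGroup E] (D : Finset E) (x : E) : ℝ :=
  sInf ((fun p => dist x p) '' (D : Set E))

/-- Fill distance (covering radius) of the design `D` for the set `A`:
`CR_A(D) = sup_{x ∈ A} min_{p ∈ D} ‖x - p‖`. -/
noncomputable def fillDist {E : Type*} [NormedAddCommGroup E] (A : Set E) (D : Finset E) : ℝ :=
  sSup ((fun x => minDist D x) '' A)

/-- Separation radius of the design `D`:
`SR(D) = (1/2) min_{p ≠ q ∈ D} ‖p - q‖`. -/
noncomputable def sepRad {E : Type*} [NormedAddCommGroup E] (D : Finset E) : ℝ :=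
  (1 / 2) * sInf ((fun p : E × E => dist p.1 p.2) '' {p | p.1 ∈ D ∧ p.2 ∈ D ∧ p.1 ≠ p.2})

/-- Mesh-ratio of the design `D` for the set `A`: `MR(D) = CR_A(D) / SR(D)`. -/
noncomputable def meshRatio {E : Type*} [NormedAddCommGroup E] (A : Set E) (D : Finset E) : ℝ :=
  fillDist A D / sepRad D

/-- The nested design consisting of the first `n` points of the sequence `x`. -/
noncomputable def design {E : Type*} (x : ℕ → E) (n : ℕ) : Finset E :=
  letI := Classical.decEq E
  (Finset.range n).image x


set_option linter.unusedSectionVars false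
set_option maxHeartbeats 2000000

section minDist
variable {E : Type*} [NormedAddCommGroup E] {D D' : Finset E} {y z : E} {A : Set E} {p q : E} {r c : ℝ}

variable {E : Type*} [NormedAddCommGroup E] {D D' : Finset E} {y z : E}

lemma minDist_nonneg (D : Finset E) (y : E) : 0 ≤ minDist D y := by
  apply Real.sInf_nonneg
  rintro r ⟨p, -, rfl⟩; exact dist_nonneg

lemma minDist_le (hp : z ∈ D) : minDist D y ≤ dist y z := by
  apply csInf_le ⟨0, by rintro r ⟨p, -, rfl⟩; exact dist_nonneg⟩
  exact ⟨z, hp, rfl⟩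

lemma exists_minDist (hD : D.Nonempty) (y : E) : ∃ p ∈ D, minDist D y = dist y p := by
  have hfin : ((fun p => dist y p) '' (D : Set E)).Finite := (D.finite_toSet).image _
  have hne : ((fun p => dist y p) '' (D : Set E)).Nonempty := ⟨dist y hD.choose, hD.choose, hD.choose_spec, rfl⟩
  obtain ⟨p, hp, h⟩ := hne.csInf_mem hfin
  exact ⟨p, hp, h.symm⟩

lemma le_minDist (hD : D.Nonempty) (h : ∀ p ∈ D, r ≤ dist y p) : r ≤ minDist D y := by
  obtain ⟨p, hp, hm⟩ := exists_minDist hD y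
  exact hm ▸ h p hp

lemma minDist_anti (h : D ⊆ D') (hD : D.Nonempty) : minDist D' y ≤ minDist D y := by
  obtain ⟨p, hp, hm⟩ := exists_minDist hD y
  exact hm ▸ minDist_le (h hp)

lemma minDist_le_dist_add (hD : D.Nonempty) : minDist D y ≤ dist y z + minDist D z := by
  obtain ⟨p, hp, hm⟩ := exists_minDist hD z
  calc minDist D y ≤ dist y p := minDist_le hp
    _ ≤ dist y z + dist z p := dist_triangle _ _ _
    _ = dist y z + minDist D z := by rw [hm]


variable {E : Type*} [NormedAddCommGroup E] {A : Set E} {D : Finset E} {y p q : E} {r c : ℝ}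

lemma fillDist_le (h : ∀ y ∈ A, minDist D y ≤ c) (hc : 0 ≤ c) : fillDist A D ≤ c := by
  apply Real.sSup_le _ hc
  rintro r ⟨z, hz, rfl⟩; exact h z hz

lemma minDist_le_fillDist (hy : y ∈ A) (hb : ∀ z ∈ A, minDist D z ≤ c) :
    minDist D y ≤ fillDist A D := by
  have hb' : BddAbove ((fun z => minDist D z) '' A) :=
    ⟨c, by rintro r ⟨z, hz, rfl⟩; exact hb z hz⟩
  exact le_csSup hb' ⟨y, hy, rfl⟩

lemma sepRad_nonneg (D : Finset E) : 0 ≤ sepRad D := by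
  apply mul_nonneg (by norm_num)
  apply Real.sInf_nonneg
  rintro r ⟨p, -, rfl⟩; exact dist_nonneg

lemma sepRad_le (hp : p ∈ D) (hq : q ∈ D) (hne : p ≠ q) : sepRad D ≤ (1/2) * dist p q := by
  have : sInf ((fun p : E × E => dist p.1 p.2) '' {p | p.1 ∈ D ∧ p.2 ∈ D ∧ p.1 ≠ p.2}) ≤ dist p q := by
    apply csInf_le ⟨0, by rintro r ⟨u, -, rfl⟩; exact dist_nonneg⟩
    exact ⟨(p, q), ⟨hp, hq, hne⟩, rfl⟩
  unfold sepRad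
  nlinarith
lemma le_sepRad (hex : ∃ p ∈ D, ∃ q ∈ D, p ≠ q)
    (h : ∀ p ∈ D, ∀ q ∈ D, p ≠ q → r ≤ dist p q) : (1/2) * r ≤ sepRad D := by
  have : r ≤ sInf ((fun p : E × E => dist p.1 p.2) '' {p | p.1 ∈ D ∧ p.2 ∈ D ∧ p.1 ≠ p.2}) := by
    apply le_csInf
    · obtain ⟨p, hp, q, hq, hne⟩ := hex; exact ⟨dist p q, ⟨(p,q), ⟨hp, hq, hne⟩, rfl⟩⟩
    · rintro b ⟨⟨u, v⟩, ⟨hu, hv, huv⟩, rfl⟩; exact h u hu v hv huv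
  unfold sepRad; nlinarith

lemma mem_design {x : ℕ → E} {n i : ℕ} (h : i < n) : x i ∈ design x n := by
  classical
  simp only [design, Finset.mem_image, Finset.mem_range]
  exact ⟨i, h, rfl⟩

lemma design_mem_iff {x : ℕ → E} {n : ℕ} : p ∈ design x n ↔ ∃ i < n, x i = p := by
  classical
  simp [design, Finset.mem_image, Finset.mem_range]

lemma design_card {x : ℕ → E} (hinj : Function.Injective x) (n : ℕ) : (design x n).card = n := by
  classical
  rw [design]
  rw [Finset.card_image_of_injective _ hinj, Finset.card_range]

lemma design_mono {x : ℕ → E} {m n : ℕ} (h : m ≤ n) : design x m ⊆ design x n := by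
  intro p hp
  rw [design_mem_iff] at hp ⊢
  obtain ⟨i, hi, rfl⟩ := hp
  exact ⟨i, lt_of_lt_of_le hi h, rfl⟩

lemma design_nonempty {x : ℕ → E} {n : ℕ} (h : 0 < n) : (design x n).Nonempty :=
  ⟨x 0, mem_design h⟩


end minDist


def Cube (d : ℕ) : Set (EuclideanSpace ℝ (Fin d)) := {y | ∀ i, y i ∈ Set.Icc (0:ℝ) 1}

section cube
variable {d : ℕ} {y z : EuclideanSpace ℝ (Fin d)}

lemma cube_closed : IsClosed (Cube d) := by
  have : Cube d = ⋂ i, (fun y : EuclideanSpace ℝ (Fin d) => y i) ⁻¹' Set.Icc (0:ℝ) 1 := by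
    ext y; simp [Cube]
  rw [this]
  exact isClosed_iInter fun i => isClosed_Icc.preimage (EuclideanSpace.proj i).continuous

lemma openCube_open : IsOpen {y : EuclideanSpace ℝ (Fin d) | ∀ i, y i ∈ Set.Ioo (0:ℝ) 1} := by
  have : {y : EuclideanSpace ℝ (Fin d) | ∀ i, y i ∈ Set.Ioo (0:ℝ) 1}
      = ⋂ i, (fun y : EuclideanSpace ℝ (Fin d) => y i) ⁻¹' Set.Ioo (0:ℝ) 1 := by
    ext y; simp
  rw [this]
  exact isOpen_iInter_of_finite fun i => isOpen_Ioo.preimage (EuclideanSpace.proj i).continuous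

lemma abs_coord_le_dist (j : Fin d) : |y j - z j| ≤ dist y z := by
  rw [EuclideanSpace.dist_eq]
  calc |y j - z j| = Real.sqrt (dist (y j) (z j) ^ 2) := by
        rw [Real.sqrt_sq_eq_abs, Real.dist_eq, abs_abs]
    _ ≤ _ := by
        apply Real.sqrt_le_sqrt
        exact Finset.single_le_sum (f := fun i => dist (y i) (z i) ^ 2)
          (fun i _ => sq_nonneg _) (Finset.mem_univ j)

lemma dist_le_sqrt_mul {M : ℝ} (hM : 0 ≤ M) (h : ∀ i, |y i - z i| ≤ M) :
    dist y z ≤ Real.sqrt d * M := by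
  rw [EuclideanSpace.dist_eq]
  have hsum : ∑ i, dist (y i) (z i) ^ 2 ≤ (d : ℝ) * M ^ 2 := by
    calc ∑ i, dist (y i) (z i) ^ 2 ≤ ∑ _i : Fin d, M ^ 2 := by
          apply Finset.sum_le_sum
          intro i _
          have := h i
          rw [Real.dist_eq] at *
          nlinarith [abs_nonneg (y i - z i), abs_sub_abs_le_abs_sub (y i) (z i)]
      _ = (d : ℝ) * M ^ 2 := by simp [mul_comm]
  calc Real.sqrt (∑ i, dist (y i) (z i) ^ 2) ≤ Real.sqrt ((d : ℝ) * M ^ 2) :=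
        Real.sqrt_le_sqrt hsum
    _ = Real.sqrt d * M := by
        rw [Real.sqrt_mul (Nat.cast_nonneg d), Real.sqrt_sq hM]

lemma frontier_cube_mem (hz : z ∈ frontier (Cube d)) :
    z ∈ Cube d ∧ ∃ j, z j = 0 ∨ z j = 1 := by
  have hzC : z ∈ Cube d := by
    have := frontier_subset_closure hz
    rwa [cube_closed.closure_eq] at this
  refine ⟨hzC, ?_⟩
  by_contra hcon
  push_neg at hcon
  have hzo : z ∈ {y : EuclideanSpace ℝ (Fin d) | ∀ i, y i ∈ Set.Ioo (0:ℝ) 1} := by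
    intro i
    obtain ⟨h0, h1⟩ := hzC i
    obtain ⟨hne0, hne1⟩ := hcon i
    exact ⟨lt_of_le_of_ne h0 (Ne.symm hne0), lt_of_le_of_ne h1 hne1⟩
  have hsub : {y : EuclideanSpace ℝ (Fin d) | ∀ i, y i ∈ Set.Ioo (0:ℝ) 1} ⊆ interior (Cube d) :=
    interior_maximal (fun y hy i => ⟨le_of_lt (hy i).1, le_of_lt (hy i).2⟩) openCube_open
  exact hz.2 (hsub hzo)

lemma mem_frontier_cube (hz : z ∈ Cube d) (j : Fin d) (hj : z j = 0 ∨ z j = 1) :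
    z ∈ frontier (Cube d) := by
  constructor
  · exact subset_closure hz
  · intro hint
    rw [mem_interior_iff_mem_nhds, Metric.mem_nhds_iff] at hint
    obtain ⟨ε, hε, hball⟩ := hint
    rcases hj with h0 | h1
    · have hz' : z - EuclideanSpace.single j (ε/2) ∈ ball z ε := by
        rw [mem_ball, dist_eq_norm]
        have : z - EuclideanSpace.single j (ε/2) - z = -(EuclideanSpace.single j (ε/2)) := by abel
        rw [this, norm_neg, EuclideanSpace.norm_single]
        rw [Real.norm_eq_abs, abs_of_pos (by linarith)]; linarith
      have := (hball hz' j).1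
      have hzz : (z - EuclideanSpace.single j (ε/2)) j = z j - ε/2 := by
        simp [EuclideanSpace.single_apply]
      rw [hzz, h0] at this; linarith
    · have hz' : z + EuclideanSpace.single j (ε/2) ∈ ball z ε := by
        rw [mem_ball, dist_eq_norm]
        have : z + EuclideanSpace.single j (ε/2) - z = EuclideanSpace.single j (ε/2) := by abel
        rw [this, EuclideanSpace.norm_single]
        rw [Real.norm_eq_abs, abs_of_pos (by linarith)]; linarith
      have := (hball hz' j).2
      have hzz : (z + EuclideanSpace.single j (ε/2)) j = z j + ε/2 := by
        simp [EuclideanSpace.single_apply]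
      rw [hzz, h1] at this; linarith

lemma infDist_le_coord (hy : y ∈ Cube d) (i : Fin d) :
    infDist y (frontier (Cube d)) ≤ min (y i) (1 - y i) := by
  obtain ⟨h0, h1⟩ := hy i
  apply le_min
  · have hz : y - EuclideanSpace.single i (y i) ∈ frontier (Cube d) := by
      apply mem_frontier_cube _ i
      · left; simp [EuclideanSpace.single_apply]
      · intro k
        by_cases hk : k = i
        · subst hk; simp [EuclideanSpace.single_apply]
        · have : (y - EuclideanSpace.single i (y i)) k = y k := by
            simp [EuclideanSpace.single_apply, hk]
          rw [this]; exact hy k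
    calc infDist y (frontier (Cube d)) ≤ dist y (y - EuclideanSpace.single i (y i)) :=
          infDist_le_dist_of_mem hz
      _ = y i := by
          rw [dist_eq_norm]
          have : y - (y - EuclideanSpace.single i (y i)) = EuclideanSpace.single i (y i) := by abel
          rw [this, EuclideanSpace.norm_single, Real.norm_eq_abs, abs_of_nonneg h0]
  · have hz : y + EuclideanSpace.single i (1 - y i) ∈ frontier (Cube d) := by
      apply mem_frontier_cube _ i
      · right; simp [EuclideanSpace.single_apply]
      · intro k
        by_cases hk : k = i
        · subst hk; simp [EuclideanSpace.single_apply]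
        · have : (y + EuclideanSpace.single i (1 - y i)) k = y k := by
            simp [EuclideanSpace.single_apply, hk]
          rw [this]; exact hy k
    calc infDist y (frontier (Cube d)) ≤ dist y (y + EuclideanSpace.single i (1 - y i)) :=
          infDist_le_dist_of_mem hz
      _ = 1 - y i := by
          rw [dist_eq_norm]
          have : y - (y + EuclideanSpace.single i (1 - y i)) = -(EuclideanSpace.single i (1 - y i)) := by abel
          rw [this, norm_neg, EuclideanSpace.norm_single, Real.norm_eq_abs, abs_of_nonneg (by linarith)]

lemma frontier_cube_nonempty (hd : 1 ≤ d) : (frontier (Cube d)).Nonempty := by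
  refine ⟨0, mem_frontier_cube (fun i => ?_) ⟨0, hd⟩ (Or.inl rfl)⟩
  simp

lemma le_infDist_cube (hd : 1 ≤ d) {r : ℝ} (h : ∀ i, r ≤ y i ∧ y i ≤ 1 - r) :
    r ≤ infDist y (frontier (Cube d)) := by
  by_contra hlt
  push_neg at hlt
  obtain ⟨z, hz, hdz⟩ := (infDist_lt_iff (frontier_cube_nonempty hd)).1 hlt
  apply absurd hdz
  push_neg
  show r ≤ dist y z
  obtain ⟨hzC, j, hj⟩ := frontier_cube_mem hz
  have hcoord := abs_coord_le_dist (y := y) (z := z) j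
  obtain ⟨hr1, hr2⟩ := h j
  rcases hj with h0 | h1
  · rw [h0] at hcoord
    calc r ≤ y j := hr1
      _ ≤ |y j - 0| := by rw [sub_zero]; exact le_abs_self _
      _ ≤ dist y z := hcoord
  · rw [h1] at hcoord
    calc r ≤ 1 - y j := by linarith
      _ ≤ |y j - 1| := by rw [abs_sub_comm]; exact le_abs_self _
      _ ≤ dist y z := hcoord

end cube


lemma push_lemma {d : ℕ} (hd : 1 ≤ d) {p : EuclideanSpace ℝ (Fin d)} (hp : p ∈ Cube d)
    {t : ℝ} (ht0 : 0 ≤ t) (ht1 : t ≤ 1) :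
    ∃ y' ∈ Cube d, dist y' p ≤ Real.sqrt d * (t/2) ∧ t/2 ≤ infDist y' (frontier (Cube d)) := by
  set c : EuclideanSpace ℝ (Fin d) := WithLp.toLp 2 (fun _ => (1:ℝ)/2) with hc
  refine ⟨p + t • (c - p), ?_, ?_, ?_⟩
  · intro i
    have hpi := hp i
    have : (p + t • (c - p)) i = p i + t * (1/2 - p i) := by simp [hc]
    rw [this]
    constructor
    · simp only [Set.mem_Icc] at hpi; nlinarith [hpi.1, hpi.2]
    · simp only [Set.mem_Icc] at hpi; nlinarith [hpi.1, hpi.2]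
  · apply dist_le_sqrt_mul (by linarith)
    intro i
    have hpi := hp i
    have : (p + t • (c - p)) i - p i = t * (1/2 - p i) := by simp [hc]; try ring
    rw [this, abs_mul, abs_of_nonneg ht0]
    simp only [Set.mem_Icc] at hpi
    have : |1/2 - p i| ≤ 1/2 := by rw [abs_le]; constructor <;> linarith [hpi.1, hpi.2]
    nlinarith
  · apply le_infDist_cube hd
    intro i
    have hpi := hp i
    simp only [Set.mem_Icc] at hpi
    have h1 : (p + t • (c - p)) i = p i + t * (1/2 - p i) := by simp [hc]
    rw [h1]
    constructor
    · nlinarith [hpi.1]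
    · nlinarith [hpi.2]

/-- Let `S = [0,1]^d` with the Euclidean norm and `β ∈ (0,∞)`. If the
nested designs `Xₙ` are generated by the boundary-phobic greedy algorithm (the `(k+1)`-th
point `x k ∈ S` maximizes over `S` the criterion
`D_β(y) = min{min_{x_i ∈ X_k} ‖y − x_i‖, β·d(y, ∂S)}`), then for all `n ≥ 2`:
`MR(Xₙ) ≤ 2(1 + √d/β)`, `CR(Xₙ) ≤ 2(1 + √d/β)·CR*ₙ` and `SR(Xₙ) ≥ SR*ₙ/(2(1 + √d/β))`,
optimal values being expressed by quantification over all `n`-point designs `D'` in `S`. -/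
theorem statement15 {d : ℕ} (hd : 1 ≤ d) (β : ℝ) (hβ : 0 < β)
    (S : Set (EuclideanSpace ℝ (Fin d)))
    (hScube : S = {y : EuclideanSpace ℝ (Fin d) | ∀ i, y i ∈ Set.Icc (0 : ℝ) 1})
    (x : ℕ → EuclideanSpace ℝ (Fin d)) (hinj : Function.Injective x) (hx0 : x 0 ∈ S)
    (hphobic : ∀ k : ℕ, 1 ≤ k → x k ∈ S ∧ ∀ y ∈ S,
      min (minDist (design x k) y) (β * Metric.infDist y (frontier S)) ≤
        min (minDist (design x k) (x k)) (β * Metric.infDist (x k) (frontier S)))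
    (n : ℕ) (hn : 2 ≤ n) :
    meshRatio S (design x n) ≤ 2 * (1 + Real.sqrt d / β) ∧
    (∀ D' : Finset (EuclideanSpace ℝ (Fin d)), ↑D' ⊆ S → D'.card = n →
        fillDist S (design x n) ≤ 2 * (1 + Real.sqrt d / β) * fillDist S D') ∧
    (∀ D' : Finset (EuclideanSpace ℝ (Fin d)), ↑D' ⊆ S → D'.card = n →
        sepRad D' / (2 * (1 + Real.sqrt d / β)) ≤ sepRad (design x n)) := by
  have hCube : S = Cube d := hScube
  subst hCube
  obtain ⟨m, rfl⟩ : ∃ m, n = m + 1 := ⟨n - 1, by omega⟩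
  have hm1 : 1 ≤ m := by omega
  set n := m + 1 with hnm
  have hn1 : 1 ≤ n := by omega
  -- positivity facts
  have hsd1 : (1:ℝ) ≤ Real.sqrt d := by
    rw [show (1:ℝ) = Real.sqrt 1 by simp]
    exact Real.sqrt_le_sqrt (by exact_mod_cast hd)
  have hsd0 : (0:ℝ) < Real.sqrt d := by linarith
  set γ : ℝ := 1 + Real.sqrt d / β with hγ
  have hγ1 : (1:ℝ) ≤ γ := by
    have : 0 < Real.sqrt d / β := by positivity
    rw [hγ]; linarith
  have hγ0 : (0:ℝ) < γ := by linarith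
  -- the value sequence
  set val : ℕ → ℝ := fun k =>
    min (minDist (design x k) (x k)) (β * infDist (x k) (frontier (Cube d))) with hval
  -- membership of points
  have hxS : ∀ k, x k ∈ Cube d := by
    intro k
    rcases Nat.eq_zero_or_pos k with rfl | hk
    · exact hx0
    · exact (hphobic k hk).1
  have hval_nonneg : ∀ k, 0 ≤ val k := by
    intro k
    apply le_min (minDist_nonneg _ _)
    exact mul_nonneg hβ.le infDist_nonneg
  -- center point
  set c : EuclideanSpace ℝ (Fin d) := WithLp.toLp 2 (fun _ => (1:ℝ)/2) with hc
  have hcC : c ∈ Cube d := by intro i; constructor <;> norm_num [hc]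
  -- val k ≤ β/2
  have hval_le : ∀ k, val k ≤ β / 2 := by
    intro k
    have h1 := infDist_le_coord (hxS k) ⟨0, hd⟩
    have h2 : min (x k ⟨0, hd⟩) (1 - x k ⟨0, hd⟩) ≤ 1/2 := by
      rcases min_le_iff.mpr (Or.inl (le_refl (x k ⟨0, hd⟩))) with h
      rcases le_or_gt (x k ⟨0, hd⟩) (1/2) with h' | h'
      · exact le_trans (min_le_left _ _) h'
      · exact le_trans (min_le_right _ _) (by linarith)
    calc val k ≤ β * infDist (x k) (frontier (Cube d)) := min_le_right _ _
      _ ≤ β * (1/2) := by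
          apply mul_le_mul_of_nonneg_left _ hβ.le
          exact le_trans h1 h2
      _ = β / 2 := by ring
  -- monotonicity
  have hmono : ∀ k, 1 ≤ k → val (k+1) ≤ val k := by
    intro k hk
    have hsub : design x k ⊆ design x (k+1) := design_mono (by omega)
    have hne : (design x k).Nonempty := design_nonempty (by omega)
    calc val (k+1) ≤ min (minDist (design x k) (x (k+1)))
          (β * infDist (x (k+1)) (frontier (Cube d))) := by
          apply min_le_min _ (le_refl _)
          exact minDist_anti hsub hne
      _ ≤ val k := (hphobic k hk).2 (x (k+1)) (hxS (k+1))
  have hmono' : ∀ j k, 1 ≤ j → j ≤ k → val k ≤ val j := by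
    intro j k hj hjk
    induction k with
    | zero => omega
    | succ k ih =>
      rcases Nat.eq_or_lt_of_le hjk with h | h
      · rw [← h]
      · exact le_trans (hmono k (by omega)) (ih (by omega))
  -- pairwise distances
  have hpair : ∀ i j, i < j → val j ≤ dist (x i) (x j) := by
    intro i j hij
    calc val j ≤ minDist (design x j) (x j) := min_le_left _ _
      _ ≤ dist (x j) (x i) := minDist_le (mem_design hij)
      _ = dist (x i) (x j) := dist_comm _ _
  -- diameter bound
  have hdiam : ∀ y ∈ Cube d, ∀ z ∈ Cube d, dist y z ≤ Real.sqrt d := by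
    intro y hy z hz
    have := dist_le_sqrt_mul (y := y) (z := z) (M := 1) zero_le_one
      (fun i => by obtain ⟨a1, a2⟩ := hy i; obtain ⟨b1, b2⟩ := hz i
                   rw [abs_le]; constructor <;> linarith)
    simpa using this
  -- center achieves val ≥ β/2 only for x k = c
  have hcenter : ∀ k, β/2 ≤ val k → x k = c := by
    intro k hk
    have h1 : β/2 ≤ β * infDist (x k) (frontier (Cube d)) :=
      le_trans hk (min_le_right _ _)
    have h2 : (1:ℝ)/2 ≤ infDist (x k) (frontier (Cube d)) := by nlinarith
    ext i
    have h3 := infDist_le_coord (hxS k) i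
    obtain ⟨ha1, hb1⟩ := hxS k i
    have h4 : (1:ℝ)/2 ≤ min (x k i) (1 - x k i) := le_trans h2 h3
    have h5 : (1:ℝ)/2 ≤ x k i := le_trans h4 (min_le_left _ _)
    have h6 : (1:ℝ)/2 ≤ 1 - x k i := le_trans h4 (min_le_right _ _)
    show x k i = (1:ℝ)/2
    linarith
  -- val n < β/2 strictly (n ≥ 2)
  have hvlt : val n < β / 2 := by
    rcases lt_or_ge (val n) (β/2) with h | h
    · exact h
    · exfalso
      have hxnc : x n = c := hcenter n h
      have hminc : β/2 ≤ minDist (design x n) (x n) := le_trans h (min_le_left _ _)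
      have hdist0 : β/2 ≤ dist c (x 0) := by
        rw [← hxnc]; exact le_trans hminc (minDist_le (mem_design (by omega)))
      have hdist1 : β/2 ≤ dist c (x 1) := by
        rw [← hxnc]; exact le_trans hminc (minDist_le (mem_design (by omega)))
      have hinfc : (1:ℝ)/2 ≤ infDist c (frontier (Cube d)) := by
        apply le_infDist_cube hd
        intro i; constructor <;> norm_num [hc]
      have hphc := (hphobic 1 (le_refl 1)).2 c hcC
      have hmc : β/2 ≤ minDist (design x 1) c := by
        apply le_minDist (design_nonempty one_pos)
        intro p hp
        rw [design_mem_iff] at hp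
        obtain ⟨i, hi, rfl⟩ := hp
        have : i = 0 := by omega
        subst this
        exact hdist0
      have hval1 : β/2 ≤ val 1 := by
        refine le_trans (le_min hmc ?_) hphc
        nlinarith
      have hx1c : x 1 = c := hcenter 1 hval1
      have : (1:ℕ) = n := hinj (hx1c.trans hxnc.symm)
      omega
  -- (A) covering bound
  have hcov : ∀ y ∈ Cube d, minDist (design x n) y ≤ γ * val n := by
    intro y hy
    by_contra hcon
    push_neg at hcon
    set a := minDist (design x n) y with ha
    set v := val n with hv
    have hv0 : 0 ≤ v := hval_nonneg n
    have hav : v < a := by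
      have : v ≤ γ * v := le_mul_of_one_le_left hv0 hγ1
      linarith
    have hphn := (hphobic n hn1).2 y hy
    have hβm : β * infDist y (frontier (Cube d)) ≤ v := by
      rcases min_le_iff.mp hphn with h | h
      · exact absurd h (by rw [← ha, ← hv] at *; linarith)
      · exact h
    -- choose t
    set T := min 1 (2*(a - v)/Real.sqrt d) with hT
    have hT1 : 2*v/β < T := by
      apply lt_min
      · rw [div_lt_one hβ]; linarith [hvlt]
      · rw [div_lt_div_iff₀ hβ hsd0]
        have : γ * v < a := hcon
        rw [hγ] at this
        have h2 : v + Real.sqrt d / β * v < a := by linarith [this]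
        have h3 : Real.sqrt d * v < β * (a - v) := by
          rw [div_mul_eq_mul_div] at h2
          have := (div_lt_iff₀ hβ).mp (by linarith : Real.sqrt d * v / β < a - v)
          linarith
        nlinarith
    set t := (2*v/β + T)/2 with ht
    have ht0 : 0 ≤ t := by
      have : 0 ≤ 2*v/β := by positivity
      rw [ht]; linarith
    have htT : t < T := by rw [ht]; linarith
    have ht1 : t ≤ 1 := le_trans htT.le (min_le_left _ _)
    have htv : 2*v/β < t := by rw [ht]; linarith
    obtain ⟨y', hy'C, hy'd, hy'i⟩ := push_lemma hd hy ht0 ht1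
    -- minDist at y' is > v
    have hmd : v < minDist (design x n) y' := by
      have h1 : a ≤ dist y y' + minDist (design x n) y' :=
        minDist_le_dist_add (design_nonempty (by omega))
      have h2 : dist y y' ≤ Real.sqrt d * (t/2) := by rw [dist_comm]; exact hy'd
      have h3 : Real.sqrt d * (t/2) < a - v := by
        have : t < 2*(a-v)/Real.sqrt d := lt_of_lt_of_le htT (min_le_right _ _)
        rw [lt_div_iff₀ hsd0] at this
        nlinarith
      linarith
    have hid : v < β * infDist y' (frontier (Cube d)) := by
      have h1' : 2 * v < t * β := by rwa [div_lt_iff₀ hβ] at htv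
      have h2' : β * (t/2) ≤ β * infDist y' (frontier (Cube d)) :=
        mul_le_mul_of_nonneg_left hy'i hβ.le
      have h3' : β * (t/2) = t * β / 2 := by ring
      linarith
    have hfin := (hphobic n hn1).2 y' hy'C
    exact lt_irrefl v (lt_of_lt_of_le (lt_min hmd hid) hfin)
  -- (B) separation bound: (1/2) * val m ≤ sepRad (design x n)
  have hsep : (1/2) * val m ≤ sepRad (design x n) := by
    apply le_sepRad
    · exact ⟨x 0, mem_design (by omega), x 1, mem_design (by omega),
        fun h => by have := hinj h; omega⟩
    · intro p hp q hq hne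
      rw [design_mem_iff] at hp hq
      obtain ⟨i, hi, rfl⟩ := hp
      obtain ⟨j, hj, rfl⟩ := hq
      have hij : i ≠ j := fun h => hne (by rw [h])
      rcases lt_or_gt_of_ne hij with h | h
      · calc val m ≤ val j := hmono' j m (by omega) (by omega)
          _ ≤ dist (x i) (x j) := hpair i j h
      · calc val m ≤ val i := hmono' i m (by omega) (by omega)
          _ ≤ dist (x i) (x j) := by rw [dist_comm]; exact hpair j i h
  -- (C)
  have hfill : ∀ D' : Finset (EuclideanSpace ℝ (Fin d)), ↑D' ⊆ Cube d → D'.card = n →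
      val n ≤ 2 * fillDist (Cube d) D' := by
    intro D' hD'sub hD'card
    have hcn : D'.card = m + 1 := by rw [hD'card]
    have hD'ne : D'.Nonempty := Finset.card_pos.mp (by omega)
    obtain ⟨p0, hp0⟩ := id hD'ne
    have hbdd : ∀ z ∈ Cube d, minDist D' z ≤ Real.sqrt d := fun z hz =>
      le_trans (minDist_le hp0) (hdiam z hz p0 (hD'sub hp0))
    have hq : ∀ i : ℕ, ∃ p ∈ D', minDist D' (x i) = dist (x i) p :=
      fun i => exists_minDist hD'ne (x i)
    choose q hqD hqd using hq
    have hmaps : ∀ i ∈ Finset.range (n+1), q i ∈ D' := fun i _ => hqD i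
    have hcard : D'.card < (Finset.range (n+1)).card := by
      rw [Finset.card_range]; omega
    obtain ⟨i, hi, j, hj, hij, hqij⟩ :=
      Finset.exists_ne_map_eq_of_card_lt_of_maps_to hcard hmaps
    rw [Finset.mem_range] at hi hj
    have hdq : ∀ i : ℕ, dist (x i) (q i) ≤ fillDist (Cube d) D' := by
      intro i
      rw [← hqd i]
      exact minDist_le_fillDist (hxS i) hbdd
    have main : ∀ i j : ℕ, i < j → j < n + 1 → q i = q j → val n ≤ 2 * fillDist (Cube d) D' := by
      intro i j hij hj hq
      calc val n ≤ val j := hmono' j n (by omega) (by omega)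
        _ ≤ dist (x i) (x j) := hpair i j hij
        _ ≤ dist (x i) (q i) + dist (q j) (x j) := by
            rw [hq]; exact dist_triangle _ _ _
        _ ≤ fillDist (Cube d) D' + fillDist (Cube d) D' := by
            have := hdq j
            rw [dist_comm] at this
            exact add_le_add (hdq i) this
        _ = 2 * fillDist (Cube d) D' := by ring
    rcases lt_or_gt_of_ne hij with h | h
    · exact main i j h hj hqij
    · exact main j i h hi hqij.symm
  -- (D)
  have hsepD : ∀ D' : Finset (EuclideanSpace ℝ (Fin d)), ↑D' ⊆ Cube d → D'.card = n →
      sepRad D' ≤ γ * val m := by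
    intro D' hD'sub hD'card
    set r := sepRad D' with hr
    have hr0 : 0 ≤ r := sepRad_nonneg D'
    -- r ≤ √d / 2
    have hcn : D'.card = m + 1 := by rw [hD'card]
    have hrle : r ≤ Real.sqrt d / 2 := by
      have h2 : 1 < D'.card := by omega
      obtain ⟨p, hp, q, hq, hpq⟩ := Finset.one_lt_card.mp h2
      calc r ≤ (1/2) * dist p q := sepRad_le hp hq hpq
        _ ≤ (1/2) * Real.sqrt d := by
            have := hdiam p (hD'sub hp) q (hD'sub hq)
            linarith
        _ = Real.sqrt d / 2 := by ring
    -- find a point of D' far from design x m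
    have hfar : ∃ p ∈ D', r ≤ minDist (design x m) p := by
      by_contra hcon
      push_neg at hcon
      have hq : ∀ p : EuclideanSpace ℝ (Fin d), ∃ z ∈ design x m,
          minDist (design x m) p = dist p z :=
        fun p => exists_minDist (design_nonempty (by omega)) p
      choose z hzD hzd using hq
      have hmaps : ∀ p ∈ D', z p ∈ design x m := fun p _ => hzD p
      have hcard : (design x m).card < D'.card := by
        rw [design_card hinj]; omega
      obtain ⟨p, hp, q, hq', hpq, hzeq⟩ :=
        Finset.exists_ne_map_eq_of_card_lt_of_maps_to hcard hmaps
      have h1 : dist p (z p) < r := by rw [← hzd p]; exact hcon p hp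
      have h2 : dist q (z q) < r := by rw [← hzd q]; exact hcon q hq'
      have h3 : dist p q < 2 * r := by
        calc dist p q ≤ dist p (z p) + dist (z q) q := by
              rw [hzeq]; exact dist_triangle _ _ _
          _ < 2 * r := by rw [dist_comm (z q) q]; linarith
      have h4 : r ≤ (1/2) * dist p q := sepRad_le hp hq' hpq
      linarith
    obtain ⟨p, hpD', hpfar⟩ := hfar
    set K := β + Real.sqrt d with hK
    have hK0 : 0 < K := by rw [hK]; linarith
    set t := min 1 (2*r/K) with ht
    have ht0 : 0 ≤ t := le_min zero_le_one (by positivity)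
    have ht1 : t ≤ 1 := min_le_left _ _
    obtain ⟨y', hy'C, hy'd, hy'i⟩ := push_lemma hd (hD'sub hpD') ht0 ht1
    -- infDist lower bound: r/K ≤ t/2
    have htlow : r / K ≤ t / 2 := by
      rcases min_cases 1 (2*r/K) with ⟨h1, h2⟩ | ⟨h1, h2⟩
      · -- t = 1, 2r/K ≥ 1
        rw [ht, h1]
        rw [div_le_div_iff₀ hK0 two_pos]
        nlinarith [hrle, hsd0, hβ]
      · rw [ht, h1]
        exact le_of_eq (by ring)
    have hinf2 : r * β / K ≤ β * infDist y' (frontier (Cube d)) := by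
      have h1 : r/K ≤ infDist y' (frontier (Cube d)) := le_trans htlow hy'i
      calc r * β / K = β * (r / K) := by ring
        _ ≤ β * infDist y' (frontier (Cube d)) :=
            mul_le_mul_of_nonneg_left h1 hβ.le
    -- minDist lower bound
    have hmd2 : r * β / K ≤ minDist (design x m) y' := by
      have h1 : minDist (design x m) p ≤ dist p y' + minDist (design x m) y' :=
        minDist_le_dist_add (design_nonempty (by omega))
      have h2 : dist p y' ≤ Real.sqrt d * (t/2) := by rw [dist_comm]; exact hy'd
      have h3 : t ≤ 2*r/K := min_le_right _ _
      have h4 : Real.sqrt d * (t/2) ≤ Real.sqrt d * (r/K) := by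
        apply mul_le_mul_of_nonneg_left _ hsd0.le
        rw [div_le_div_iff₀ two_pos hK0]
        rw [le_div_iff₀ hK0] at h3
        linarith
      have h5 : r - Real.sqrt d * (r/K) = r * β / K := by
        field_simp
        ring
      have h6 : r ≤ minDist (design x m) p := hpfar
      linarith
    have hphm := (hphobic m hm1).2 y' hy'C
    have h7 : r * β / K ≤ val m := le_trans (le_min hmd2 hinf2) hphm
    -- conclude r ≤ γ * val m
    rw [div_le_iff₀ hK0] at h7
    have h8 : val m * K = β * (γ * val m) := by
      rw [hγ, hK]; field_simp
    rw [h8] at h7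
    have h9 : β * r ≤ β * (γ * val m) := by linarith
    exact le_of_mul_le_mul_left h9 hβ
  -- assemble
  have hvn0 : 0 ≤ val n := hval_nonneg n
  have hfb : fillDist (Cube d) (design x n) ≤ γ * val n :=
    fillDist_le hcov (mul_nonneg hγ0.le hvn0)
  have hvmn : val n ≤ val m := hmono m hm1
  refine ⟨?_, ?_, ?_⟩
  · rcases eq_or_lt_of_le (sepRad_nonneg (design x n)) with h0 | h0
    · rw [meshRatio, ← h0, div_zero]
      linarith
    · rw [meshRatio, div_le_iff₀ h0]
      calc fillDist (Cube d) (design x n) ≤ γ * val n := hfb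
        _ ≤ γ * val m := mul_le_mul_of_nonneg_left hvmn hγ0.le
        _ ≤ γ * (2 * sepRad (design x n)) :=
            mul_le_mul_of_nonneg_left (by linarith [hsep]) hγ0.le
        _ = 2 * γ * sepRad (design x n) := by ring
  · intro D' hsub hcard
    have h1 := hfill D' hsub hcard
    calc fillDist (Cube d) (design x n) ≤ γ * val n := hfb
      _ ≤ γ * (2 * fillDist (Cube d) D') := mul_le_mul_of_nonneg_left h1 hγ0.le
      _ = 2 * γ * fillDist (Cube d) D' := by ring
  · intro D' hsub hcard
    have h1 := hsepD D' hsub hcard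
    rw [div_le_iff₀ (by linarith : (0:ℝ) < 2*γ)]
    calc sepRad D' ≤ γ * val m := h1
      _ ≤ γ * (2 * sepRad (design x n)) :=
          mul_le_mul_of_nonneg_left (by linarith [hsep]) hγ0.le
      _ = sepRad (design x n) * (2*γ) := by ring
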